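/- Let v ∈ ℂ² be a unit vector with components (v₀, v₁), let 0 ≤ ε, and suppose there exists β ∈ ℂ with ‖c v − β • v‖ ≤ ε, where c is the fermion annihilation operator. Then |v₁|² ≤ ε, i.e., ε bounds the occupation probability of the one-fermion state. -/

import Mathlib

/-- If a unit vector `v` is an ε-approximate eigenstate of the fermion
annihilation operator, then `ε` bounds the occupation probability `|v₁|²`
of the one-fermion state. -/
theorem occupation_probability_bound
    (c : EuclideanSpace ℂ (Fin 2) →ₗ[ℂ] EuclideanSpace ℂ (Fin 2))
    (hc0 : c (EuclideanSpace.single 0 1) = 0)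
    (hc1 : c (EuclideanSpace.single 1 1) = EuclideanSpace.single 0 1)
    (v : EuclideanSpace ℂ (Fin 2)) (hv : ‖v‖ = 1)
    (ε : ℝ) (hε : 0 ≤ ε)
    (h : ∃ β : ℂ, ‖c v - β • v‖ ≤ ε) :
    ‖v 1‖ ^ 2 ≤ ε := by
  obtain ⟨β, hβ⟩ := h
  have hv' : v = v 0 • EuclideanSpace.single 0 1 + v 1 • EuclideanSpace.single 1 1 := by
    ext i
    fin_cases i <;>
      simp [EuclideanSpace.single_apply, PiLp.add_apply, PiLp.smul_apply]
  have hcv : c v = v 1 • EuclideanSpace.single 0 1 := by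
    conv_lhs => rw [hv']
    simp [map_add, map_smul, hc0, hc1]
  set a := ‖v 0‖ with ha
  set b := ‖v 1‖ with hb
  set t := ‖β‖ with ht
  have ha0 : 0 ≤ a := norm_nonneg _
  have hb0 : 0 ≤ b := norm_nonneg _
  have ht0 : 0 ≤ t := norm_nonneg _
  -- norm of v
  have hnorm : a ^ 2 + b ^ 2 = 1 := by
    have := hv
    rw [EuclideanSpace.norm_eq] at this
    have h2 : Real.sqrt (‖v 0‖ ^ 2 + ‖v 1‖ ^ 2) = 1 := by
      rw [← this]; congr 1; rw [Fin.sum_univ_two]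
    have h3 : ‖v 0‖ ^ 2 + ‖v 1‖ ^ 2 = 1 := by
      have := Real.sqrt_eq_one.mp h2
      linarith
    simpa [ha, hb] using h3
  -- components of the residual
  have e0 : (c v - β • v) 0 = v 1 - β * v 0 := by
    rw [hcv]
    simp [PiLp.sub_apply, PiLp.smul_apply, EuclideanSpace.single_apply, smul_eq_mul]
  have e1 : (c v - β • v) 1 = -(β * v 1) := by
    rw [hcv]
    simp [PiLp.sub_apply, PiLp.smul_apply, EuclideanSpace.single_apply, smul_eq_mul]
  have hres : ‖c v - β • v‖ ^ 2 =
      ‖v 1 - β * v 0‖ ^ 2 + (t * b) ^ 2 := by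
    rw [EuclideanSpace.norm_eq]
    rw [Fin.sum_univ_two, e0, e1]
    rw [Real.sq_sqrt (by positivity)]
    simp [ht, hb, norm_mul, mul_pow]
  have hsq : ‖v 1 - β * v 0‖ ^ 2 + (t * b) ^ 2 ≤ ε ^ 2 := by
    rw [← hres]
    have := norm_nonneg (c v - β • v)
    nlinarith
  have habs : |b - t * a| ≤ ‖v 1 - β * v 0‖ := by
    have := abs_norm_sub_norm_le (v 1) (β * v 0)
    simpa [ha, hb, ht, norm_mul] using this
  have hkey : b ^ 4 ≤ ε ^ 2 := by
    have h1 : (b - t * a) ^ 2 ≤ ‖v 1 - β * v 0‖ ^ 2 := by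
      have := sq_abs (b - t * a)
      nlinarith [abs_nonneg (b - t*a), norm_nonneg (v 1 - β * v 0)]
    have hid : (b - t * a) ^ 2 + (t * b) ^ 2 = (t - a * b) ^ 2 + b ^ 4 := by
      linear_combination (t ^ 2 - b ^ 2) * hnorm
    linarith [sq_nonneg (t - a * b)]
  clear_value a b t
  clear ha hb ht hβ hv' hcv e0 e1 hres hsq habs hc0 hc1 hv β c v
  nlinarith [sq_nonneg (b ^ 2 - ε), hkey, hb0, hε]
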